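/- Let U = {(x,y) ∈ ℝ² : x ≠ 0, y ≠ 0, x + 1 ≠ 0, y + 1 ≠ 0, x + y + 1 ≠ 0}, let τ : U → U be given by τ(x,y) = (y, (y+1)/x), and let f(x,y) = log|x⁻¹ + x⁻²| (the quantity x⁻¹ + x⁻² is well-defined and nonzero throughout U). Then f is 0-mesic under the order-5 action of τ: for every (x,y) ∈ U, Σ_{i=0}^{4} f(τ^i(x,y)) = 0. Equivalently, writing h(z) = z⁻¹ + z⁻² and letting (x₁,…,x₅) be the five first coordinates of the τ-orbit of (x,y), one has h(x₁)·h(x₂)·h(x₃)·h(x₄)·h(x₅) = 1. -/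

import Mathlib

/-- The domain of the Lyness map. -/
def lynessDomain : Set (ℝ × ℝ) :=
  {p | p.1 ≠ 0 ∧ p.2 ≠ 0 ∧ p.1 + 1 ≠ 0 ∧ p.2 + 1 ≠ 0 ∧ p.1 + p.2 + 1 ≠ 0}

/-- The Lyness map τ(x,y) = (y, (y+1)/x). -/
noncomputable def lynessMap (p : ℝ × ℝ) : ℝ × ℝ := (p.2, (p.2 + 1) / p.1)

lemma h_ne_zero (v : ℝ) (hv : v ≠ 0) (hv1 : v + 1 ≠ 0) : v⁻¹ + (v⁻¹) ^ 2 ≠ 0 := by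
  have h : v⁻¹ + (v⁻¹) ^ 2 = (v + 1) / v ^ 2 := by field_simp
  rw [h]
  exact div_ne_zero hv1 (pow_ne_zero _ hv)

theorem lyness_log_zero_mesic :
    (∀ p ∈ lynessDomain, p.1⁻¹ + (p.1⁻¹) ^ 2 ≠ 0) ∧
    (∀ p ∈ lynessDomain,
      ∑ i ∈ Finset.range 5,
        Real.log |(lynessMap^[i] p).1⁻¹ + ((lynessMap^[i] p).1⁻¹) ^ 2| = 0) ∧
    (∀ p ∈ lynessDomain,
      ∏ i ∈ Finset.range 5,
        ((lynessMap^[i] p).1⁻¹ + ((lynessMap^[i] p).1⁻¹) ^ 2) = 1) := by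
  have key : ∀ p ∈ lynessDomain,
      (∀ i ∈ Finset.range 5,
        (lynessMap^[i] p).1⁻¹ + ((lynessMap^[i] p).1⁻¹) ^ 2 ≠ 0) ∧
      (∏ i ∈ Finset.range 5,
        ((lynessMap^[i] p).1⁻¹ + ((lynessMap^[i] p).1⁻¹) ^ 2) = 1) := by
    rintro ⟨x, y⟩ ⟨hx, hy, hx1, hy1, hxy⟩
    simp only at hx hy hx1 hy1 hxy
    have e0 : (lynessMap^[0] (x, y)).1 = x := rfl
    have e1 : (lynessMap^[1] (x, y)).1 = y := rfl
    have e2 : (lynessMap^[2] (x, y)).1 = (y + 1) / x := rfl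
    have e3 : (lynessMap^[3] (x, y)).1 = ((y + 1) / x + 1) / y := rfl
    have e4 : (lynessMap^[4] (x, y)).1 = (((y + 1) / x + 1) / y + 1) / ((y + 1) / x) := rfl
    -- nonzeroness of the orbit values and their successors
    have v2 : (y + 1) / x ≠ 0 := div_ne_zero hy1 hx
    have v2' : (y + 1) / x + 1 ≠ 0 := by
      have h : (y + 1) / x + 1 = (x + y + 1) / x := by field_simp; ring
      rw [h]; exact div_ne_zero hxy hx
    have v3 : ((y + 1) / x + 1) / y ≠ 0 := div_ne_zero v2' hy
    have v3' : ((y + 1) / x + 1) / y + 1 ≠ 0 := by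
      have h : ((y + 1) / x + 1) / y + 1 = (x + 1) * (y + 1) / (x * y) := by
        field_simp; ring
      rw [h]; exact div_ne_zero (mul_ne_zero hx1 hy1) (mul_ne_zero hx hy)
    have v4 : (((y + 1) / x + 1) / y + 1) / ((y + 1) / x) ≠ 0 := div_ne_zero v3' v2
    have v4' : (((y + 1) / x + 1) / y + 1) / ((y + 1) / x) + 1 ≠ 0 := by
      have h : (((y + 1) / x + 1) / y + 1) / ((y + 1) / x) + 1 = (x + y + 1) / y := by
        field_simp; ring
      rw [h]; exact div_ne_zero hxy hy
    have e3' : ((y + 1) / x + 1) / y = (x + y + 1) / (x * y) := by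
      field_simp; ring
    have e4' : (((y + 1) / x + 1) / y + 1) / ((y + 1) / x) = (x + 1) / y := by
      field_simp
      ring
    constructor
    · intro i hi
      simp only [Finset.mem_range] at hi
      interval_cases i
      · rw [e0]; exact h_ne_zero x hx hx1
      · rw [e1]; exact h_ne_zero y hy hy1
      · rw [e2]; exact h_ne_zero _ v2 v2'
      · rw [e3]; exact h_ne_zero _ v3 v3'
      · rw [e4]; exact h_ne_zero _ v4 v4'
    · have t2 : ((y + 1) / x)⁻¹ + (((y + 1) / x)⁻¹) ^ 2 = x * (x + y + 1) / (y + 1) ^ 2 := by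
        field_simp; ring
      have t3 : ((x + y + 1) / (x * y))⁻¹ + (((x + y + 1) / (x * y))⁻¹) ^ 2
          = x * y * ((x + 1) * (y + 1)) / (x + y + 1) ^ 2 := by
        field_simp; ring
      have t4 : ((x + 1) / y)⁻¹ + (((x + 1) / y)⁻¹) ^ 2 = y * (x + y + 1) / (x + 1) ^ 2 := by
        field_simp; ring
      have hform : ∀ v : ℝ, v ≠ 0 → v⁻¹ + (v⁻¹) ^ 2 = (v + 1) / v ^ 2 := by
        intro v hv; field_simp
      rw [Finset.prod_range_succ, Finset.prod_range_succ, Finset.prod_range_succ,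
        Finset.prod_range_succ, Finset.prod_range_one, e0, e1, e2, e3, e4, e4', e3',
        hform x hx, hform y hy, t2, t3, t4, div_mul_div_comm, div_mul_div_comm,
        div_mul_div_comm, div_mul_div_comm, div_eq_one_iff_eq]
      · ring
      · exact mul_ne_zero (mul_ne_zero (mul_ne_zero (mul_ne_zero (pow_ne_zero _ hx)
          (pow_ne_zero _ hy)) (pow_ne_zero _ hy1)) (pow_ne_zero _ hxy)) (pow_ne_zero _ hx1)
  refine ⟨fun p hp => by simpa using (key p hp).1 0 (by norm_num), fun p hp => ?_,
    fun p hp => (key p hp).2⟩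
  obtain ⟨hne, hprod⟩ := key p hp
  simp only [Real.log_abs]
  rw [← Real.log_prod hne, hprod, Real.log_one]
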